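/- arXiv:2605.04442 — 2 statements merged into one kernel-verified Lean document; each statement's English description precedes it below -/
import Mathlib

section
/- Let y : [1/2, 1] → [0, ∞) be a non-decreasing differentiable function, let ε̂ ∈ (0,1), n ≥ 4 an integer, and C₀ > 0. Suppose D ⊂ [1/2,1] is measurable with H¹(D) ≥ 1/4, and for every t ∈ D one has y(t) ≤ C₀·((y'(t))^{1/2} + (y'(t)/|log ε̂|)^{(n-2)/(n-3)}·|log ε̂| + 1). Then there exists η₁ > 0 depending only on C₀ and n such that: if there exists t₀ ∈ [1/2,1] with H¹(D ∩ [1/2, t₀]) ≥ 1/8 and y(t₀) ≤ η₁·|log ε̂|, then y(1/2) ≤ C for some constant C depending only on C₀ and n (one may take C = 64C₀² + C₀). -/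
open MeasureTheory Set Filter
open scoped ENNReal

private lemma deriv_nonneg_of_monotoneOn {y : ℝ → ℝ} {a b t d : ℝ}
    (hy : MonotoneOn y (Icc a b)) (ht : t ∈ Icc a b) (htb : t < b)
    (hder : HasDerivAt y d t) : 0 ≤ d := by
  have H : HasDerivWithinAt y d (Ioi t) t := hder.hasDerivWithinAt
  rw [hasDerivWithinAt_iff_tendsto_slope] at H
  have hset : Ioi t \ {t} = Ioi t := diff_singleton_eq_self (by simp)
  rw [hset] at H
  refine ge_of_tendsto H ?_
  filter_upwards [Ioo_mem_nhdsGT htb] with x hx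
  have hx1 : x ∈ Icc a b := ⟨ht.1.trans hx.1.le, hx.2.le⟩
  rw [slope_def_field]
  exact div_nonneg (sub_nonneg.2 (hy ht hx1 hx.1.le)) (sub_nonneg.2 hx.1.le)

set_option maxHeartbeats 1000000 in
/-- ODE-type lemma (Lemma `AnODE`). Let `y : [1/2,1] → [0,∞)` be
non-decreasing and differentiable, `ε̂ ∈ (0,1)`, `n ≥ 4`, `C₀ > 0`, and let
`D ⊆ [1/2,1]` be measurable with `H¹(D) ≥ 1/4` on which the differential
inequality holds.  Then there is `η₁ > 0`, depending only on `C₀` and `n`, such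
that the existence of `t₀` with `H¹(D ∩ [1/2,t₀]) ≥ 1/8` and
`y t₀ ≤ η₁ |log ε̂|` forces `y (1/2) ≤ 64 C₀² + C₀`. -/
theorem stmt0 (C₀ : ℝ) (hC₀ : 0 < C₀) (n : ℕ) (hn : 4 ≤ n) :
    ∃ η₁ : ℝ, 0 < η₁ ∧
      ∀ (y : ℝ → ℝ) (ε : ℝ) (D : Set ℝ),
        0 < ε → ε < 1 →
        (∀ t ∈ Icc (1/2 : ℝ) 1, 0 ≤ y t) →
        MonotoneOn y (Icc (1/2 : ℝ) 1) →
        (∀ t ∈ Icc (1/2 : ℝ) 1, DifferentiableAt ℝ y t) →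
        MeasurableSet D → D ⊆ Icc (1/2 : ℝ) 1 →
        (1/4 : ℝ≥0∞) ≤ volume D →
        (∀ t ∈ D, y t ≤ C₀ * ((deriv y t) ^ ((1 : ℝ)/2) +
            (deriv y t / |Real.log ε|) ^ (((n : ℝ) - 2)/((n : ℝ) - 3)) * |Real.log ε| + 1)) →
        ∀ t₀ ∈ Icc (1/2 : ℝ) 1,
          (1/8 : ℝ≥0∞) ≤ volume (D ∩ Icc (1/2 : ℝ) t₀) →
          y t₀ ≤ η₁ * |Real.log ε| →
          y (1/2) ≤ 64 * C₀ ^ 2 + C₀ := by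
  -- basic facts about the exponents
  have hn4 : (4 : ℝ) ≤ (n : ℝ) := by exact_mod_cast hn
  set β : ℝ := ((n : ℝ) - 3)/((n : ℝ) - 2) with hβdef
  have hn2 : (0 : ℝ) < (n : ℝ) - 2 := by linarith
  have hn3 : (0 : ℝ) < (n : ℝ) - 3 := by linarith
  have hβ0 : 0 < β := div_pos hn3 hn2
  have hβ1 : β < 1 := by
    rw [hβdef, div_lt_one hn2]; linarith
  have h1β : 0 < 1 - β := by linarith
  set α : ℝ := ((n : ℝ) - 2)/((n : ℝ) - 3) with hαdef
  have hαβ : α * β = 1 := by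
    rw [hαdef, hβdef]; field_simp
  -- choice of η₁
  set X : ℝ := (1 - β)/(16 * (2*C₀) ^ β) with hXdef
  have h2C : (0:ℝ) < (2*C₀) ^ β := Real.rpow_pos_of_pos (by linarith) _
  have hX0 : 0 < X := div_pos h1β (by positivity)
  refine ⟨X ^ ((1:ℝ)/(1-β)), Real.rpow_pos_of_pos hX0 _, ?_⟩
  set η₁ : ℝ := X ^ ((1:ℝ)/(1-β)) with hη₁def
  have hη₁0 : 0 < η₁ := Real.rpow_pos_of_pos hX0 _
  have hη₁pow : η₁ ^ (1 - β) = X := by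
    rw [hη₁def, ← Real.rpow_mul hX0.le, one_div_mul_cancel (ne_of_gt h1β), Real.rpow_one]
  intro y ε D hε hε1 hy0 hymono hydiff hD hDsub hDvol hode t₀ ht₀ hvol ht₀y
  by_contra hcon
  push_neg at hcon
  set L : ℝ := |Real.log ε| with hLdef
  have hL : 0 < L := abs_pos.2 (ne_of_lt (Real.log_neg hε hε1))
  set Y : ℝ := y (1/2) with hYdef
  have hY : 64 * C₀ ^ 2 + C₀ < Y := hcon
  have hYC : C₀ + 64 * C₀ ^ 2 < Y := by linarith
  -- the auxiliary function G and its derivative g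
  set c₁ : ℝ := (2*C₀) ^ β * L ^ (β - 1) with hc₁def
  have hc₁0 : 0 < c₁ := mul_pos h2C (Real.rpow_pos_of_pos hL _)
  set c₂ : ℝ := c₁ / (1 - β) with hc₂def
  have hc₂0 : 0 < c₂ := div_pos hc₁0 h1β
  set G : ℝ → ℝ := fun u => -(4*C₀^2) * (u - C₀)⁻¹ + c₂ * (u - C₀) ^ (1 - β) with hGdef
  set g : ℝ → ℝ := fun u => 4*C₀^2 * ((u - C₀)^2)⁻¹ + c₁ * (u - C₀) ^ (-β) with hgdef
  have hG : ∀ u : ℝ, C₀ < u → HasDerivAt G (g u) u := by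
    intro u hu
    have hu0 : u - C₀ ≠ 0 := ne_of_gt (by linarith)
    have h1 : HasDerivAt (fun v : ℝ => v - C₀) 1 u := (hasDerivAt_id u).sub_const C₀
    have h2 : HasDerivAt (fun v : ℝ => (v - C₀)⁻¹) (-1/(u - C₀)^2) u := by
      exact h1.inv hu0
    have h3 : HasDerivAt (fun v : ℝ => (v - C₀) ^ (1-β)) ((1-β) * (u - C₀) ^ (1-β-1) * 1) u := by
      exact (Real.hasDerivAt_rpow_const (Or.inl hu0)).comp u h1
    have h4 := (h2.const_mul (-(4*C₀^2))).add (h3.const_mul c₂)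
    refine h4.congr_deriv ?_
    symm
    have he : (1:ℝ) - β - 1 = -β := by ring
    rw [he]
    have hc : c₂ * (1 - β) = c₁ := div_mul_cancel₀ _ (ne_of_gt h1β)
    have e1 : c₂ * ((1 - β) * (u - C₀) ^ (-β) * 1) = c₁ * (u - C₀) ^ (-β) := by
      rw [mul_one, ← mul_assoc, hc]
    rw [e1]
    simp only [hgdef]
    have h2ne : ((u - C₀)^2 : ℝ) ≠ 0 := pow_ne_zero 2 hu0
    field_simp
  -- monotonicity of G on (C₀, ∞)
  have hGmono : ∀ u v : ℝ, C₀ < u → u ≤ v → G u ≤ G v := by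
    intro u v hu huv
    have hu0 : 0 < u - C₀ := by linarith
    have hv0 : 0 < v - C₀ := by linarith
    have ht1 : (v - C₀)⁻¹ ≤ (u - C₀)⁻¹ := by
      apply inv_anti₀ hu0; linarith
    have ht2 : (u - C₀) ^ (1-β) ≤ (v - C₀) ^ (1-β) :=
      Real.rpow_le_rpow hu0.le (by linarith) h1β.le
    have p1 : 4*C₀^2 * (v - C₀)⁻¹ ≤ 4*C₀^2 * (u - C₀)⁻¹ :=
      mul_le_mul_of_nonneg_left ht1 (by positivity)
    have p2 : c₂ * (u - C₀) ^ (1-β) ≤ c₂ * (v - C₀) ^ (1-β) :=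
      mul_le_mul_of_nonneg_left ht2 hc₂0.le
    simp only [hGdef]
    linarith
  set h : ℝ → ℝ := fun t => G (y t) with hhdef
  -- basic facts about y on the interval
  have hIccsub : Icc (1/2 : ℝ) t₀ ⊆ Icc (1/2 : ℝ) 1 := Icc_subset_Icc le_rfl ht₀.2
  have h12mem : (1/2 : ℝ) ∈ Icc (1/2 : ℝ) 1 := ⟨le_rfl, by norm_num⟩
  have hylb : ∀ t ∈ Icc (1/2 : ℝ) t₀, Y ≤ y t := by
    intro t ht
    exact hymono h12mem (hIccsub ht) ht.1
  have hyub : ∀ t ∈ Icc (1/2 : ℝ) t₀, y t ≤ y t₀ := by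
    intro t ht
    exact hymono (hIccsub ht) ht₀ ht.2
  have hYgtC : C₀ < Y := by linarith [sq_nonneg C₀]
  -- monotonicity of h
  have hhmono : ∀ s ∈ Icc (1/2:ℝ) t₀, ∀ t ∈ Icc (1/2:ℝ) t₀, s ≤ t → h s ≤ h t := by
    intro s hs t ht hst
    exact hGmono _ _ (lt_of_lt_of_le hYgtC (hylb s hs)) (hymono (hIccsub hs) (hIccsub ht) hst)
  -- the good set
  set S : Set ℝ := (D ∩ Icc (1/2 : ℝ) t₀) \ {(1/2 : ℝ), 1} with hSdef
  have hSmeas : MeasurableSet S :=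
    (hD.inter measurableSet_Icc).diff (Set.toFinite _).measurableSet
  have hSvol : (1/8 : ℝ≥0∞) ≤ volume S := by
    rw [hSdef, measure_diff_null ((Set.toFinite _).measure_zero _)]
    exact hvol
  have hSsub : S ⊆ Icc (1/2 : ℝ) t₀ := fun t ht => ht.1.2
  -- the key pointwise estimate on S
  have hmain : ∀ t ∈ S, 1 ≤ g (y t) * deriv y t := by
    intro t ht
    have htI : t ∈ Icc (1/2 : ℝ) 1 := hIccsub (hSsub ht)
    have ht1 : t < 1 := lt_of_le_of_ne htI.2 (fun hteq => ht.2 (by simp [hteq]))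
    have hder : HasDerivAt y (deriv y t) t := (hydiff t htI).hasDerivAt
    set d : ℝ := deriv y t with hddef
    have hd0 : 0 ≤ d := deriv_nonneg_of_monotoneOn hymono htI ht1 hder
    set u : ℝ := y t with hudef
    have huY : Y ≤ u := hylb t (hSsub ht)
    have hsq64 : (0:ℝ) ≤ 64 * C₀^2 := by positivity
    have huC : 64 * C₀^2 < u - C₀ := by linarith
    have huC0 : 0 < u - C₀ := by linarith
    have hode' := hode t ht.1.1
    have hexp : C₀ * (d ^ ((1:ℝ)/2) + (d/L) ^ α * L + 1)
        = C₀ * d ^ ((1:ℝ)/2) + C₀ * ((d/L) ^ α * L) + C₀ := by ring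
    rw [hexp] at hode'
    have hsum : (u - C₀) ≤ C₀ * d ^ ((1:ℝ)/2) + C₀ * ((d/L) ^ α * L) := by linarith
    have hgnn1 : 0 ≤ 4*C₀^2 * ((u - C₀)^2)⁻¹ := by positivity
    have hgnn2 : 0 ≤ c₁ * (u - C₀) ^ (-β) :=
      mul_nonneg hc₁0.le (Real.rpow_nonneg huC0.le _)
    have hgu : g u = 4*C₀^2 * ((u - C₀)^2)⁻¹ + c₁ * (u - C₀) ^ (-β) := rfl
    rcases le_or_gt ((u - C₀)/2) (C₀ * d ^ ((1:ℝ)/2)) with hA | hA'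
    · -- case A
      have hroot : (u - C₀)/(2*C₀) ≤ d ^ ((1:ℝ)/2) := by
        rw [div_le_iff₀ (by positivity)]
        linarith
      have hsq : (d ^ ((1:ℝ)/2)) ^ (2:ℕ) = d := by
        rw [← Real.rpow_natCast (d ^ ((1:ℝ)/2)) 2, ← Real.rpow_mul hd0]
        norm_num
      have hdge : ((u - C₀)/(2*C₀))^(2:ℕ) ≤ d := by
        rw [← hsq]
        exact pow_le_pow_left₀ (by positivity) hroot 2
      have he1 : 4*C₀^2 * ((u - C₀)^2)⁻¹ * ((u - C₀)/(2*C₀))^(2:ℕ) = 1 := by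
        field_simp
        ring
      calc (1:ℝ) = 4*C₀^2 * ((u - C₀)^2)⁻¹ * ((u - C₀)/(2*C₀))^(2:ℕ) := he1.symm
        _ ≤ 4*C₀^2 * ((u - C₀)^2)⁻¹ * d := by
            exact mul_le_mul_of_nonneg_left hdge hgnn1
        _ ≤ g u * d := by
            rw [hgu]; linarith [mul_nonneg hgnn2 hd0]
    · -- case B
      have hB : (u - C₀)/2 ≤ C₀ * ((d/L) ^ α * L) := by linarith
      have hb0 : 0 < (u - C₀)/(2*C₀*L) := by positivity
      have hdL0 : 0 ≤ d / L := div_nonneg hd0 hL.le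
      have h4 : (u - C₀)/(2*C₀*L) ≤ (d/L) ^ α := by
        rw [div_le_iff₀ (by positivity)]
        linarith
      have h5 : ((u - C₀)/(2*C₀*L)) ^ β ≤ d / L := by
        calc ((u - C₀)/(2*C₀*L)) ^ β ≤ ((d/L) ^ α) ^ β :=
              Real.rpow_le_rpow hb0.le h4 hβ0.le
          _ = (d/L) ^ (α * β) := (Real.rpow_mul hdL0 α β).symm
          _ = d / L := by rw [hαβ, Real.rpow_one]
      have h6 : ((u - C₀)/(2*C₀*L)) ^ β * L ≤ d := (le_div_iff₀ hL).1 h5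
      have key_eq : c₁ * (u - C₀) ^ (-β) * (((u - C₀)/(2*C₀*L)) ^ β * L) = 1 := by
        have hrw1 : ((u - C₀)/(2*C₀*L)) ^ β = (u - C₀) ^ β / ((2*C₀) ^ β * L ^ β) := by
          rw [Real.div_rpow huC0.le (by positivity),
            Real.mul_rpow (by positivity : (0:ℝ) ≤ 2*C₀) hL.le]
        have hrw2 : (u - C₀) ^ (-β) = ((u - C₀) ^ β)⁻¹ := Real.rpow_neg huC0.le _
        have hrw3 : L ^ (β - 1) = L ^ β / L := by
          rw [Real.rpow_sub hL, Real.rpow_one]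
        have hne1 : ((2:ℝ)*C₀) ^ β ≠ 0 := ne_of_gt h2C
        have hne2 : L ^ β ≠ 0 := ne_of_gt (Real.rpow_pos_of_pos hL _)
        have hne3 : (u - C₀) ^ β ≠ 0 := ne_of_gt (Real.rpow_pos_of_pos huC0 _)
        rw [hc₁def, hrw1, hrw2, hrw3]
        field_simp
      calc (1:ℝ) = c₁ * (u - C₀) ^ (-β) * (((u - C₀)/(2*C₀*L)) ^ β * L) := key_eq.symm
        _ ≤ c₁ * (u - C₀) ^ (-β) * d := mul_le_mul_of_nonneg_left h6 hgnn2
        _ ≤ g u * d := by rw [hgu]; linarith [mul_nonneg hgnn1 hd0]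
  -- derivative of h on S
  have hhder : ∀ t ∈ S, HasDerivAt h (g (y t) * deriv y t) t := by
    intro t ht
    have htI : t ∈ Icc (1/2 : ℝ) 1 := hIccsub (hSsub ht)
    have hder : HasDerivAt y (deriv y t) t := (hydiff t htI).hasDerivAt
    have huC0 : C₀ < y t := lt_of_lt_of_le hYgtC (hylb t (hSsub ht))
    exact (hG (y t) huC0).comp t hder
  -- injectivity of h on S
  have hinj : InjOn h S := by
    have key : ∀ a ∈ S, ∀ b ∈ S, a < b → h a ≠ h b := by
      intro a ha b hb hab heq
      have hconst : ∀ z ∈ Icc a b, h z = h a := by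
        intro z hz
        have hzI : z ∈ Icc (1/2:ℝ) t₀ :=
          ⟨(hSsub ha).1.trans hz.1, hz.2.trans (hSsub hb).2⟩
        have l1 : h a ≤ h z := hhmono a (hSsub ha) z hzI hz.1
        have l2 : h z ≤ h b := hhmono z hzI b (hSsub hb) hz.2
        rw [← heq] at l2
        linarith
      have H1 : HasDerivWithinAt h (g (y a) * deriv y a) (Icc a b) a :=
        (hhder a ha).hasDerivWithinAt
      have H2 : HasDerivWithinAt h 0 (Icc a b) a := by
        exact (hasDerivWithinAt_const a (Icc a b) (h a)).congr hconst
          (hconst a ⟨le_rfl, hab.le⟩)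
      have hud : UniqueDiffWithinAt ℝ (Icc a b) a :=
        (uniqueDiffOn_Icc hab) a ⟨le_rfl, hab.le⟩
      have := H1.derivWithin hud
      rw [H2.derivWithin hud] at this
      have h1le := hmain a ha
      rw [← this] at h1le
      norm_num at h1le
    intro x hx z hz hxz
    rcases lt_trichotomy x z with hlt | heq | hgt
    · exact absurd hxz (key x hx z hz hlt)
    · exact heq
    · exact absurd hxz.symm (key z hz x hx hgt)
  -- the Jacobian estimate
  set f' : ℝ → ℝ →L[ℝ] ℝ :=
    fun t => ContinuousLinearMap.smulRight (1 : ℝ →L[ℝ] ℝ) (g (y t) * deriv y t) with hf'def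
  have hfd : ∀ t ∈ S, HasFDerivWithinAt h (f' t) S t := by
    intro t ht
    exact (hhder t ht).hasDerivWithinAt.hasFDerivWithinAt
  have hjac := lintegral_abs_det_fderiv_le_addHaar_image volume hSmeas hfd hinj
  have hlow : volume S ≤ ∫⁻ x in S, ENNReal.ofReal |(f' x).det| := by
    have : volume S = ∫⁻ _ in S, 1 := (setLIntegral_one S).symm
    rw [this]
    refine lintegral_mono_ae ((ae_restrict_iff' hSmeas).2 (ae_of_all _ fun x hx => ?_))
    have h1 := hmain x hx
    rw [hf'def]
    simp only [ContinuousLinearMap.smulRight_one_eq_toSpanSingleton, ContinuousLinearMap.det_toSpanSingleton]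
    exact ENNReal.one_le_ofReal.2 (le_trans h1 (le_abs_self _))
  -- upper bound for the image measure
  have h12mem' : (1/2:ℝ) ∈ Icc (1/2:ℝ) t₀ := ⟨le_rfl, ht₀.1⟩
  have ht₀mem' : t₀ ∈ Icc (1/2:ℝ) t₀ := ⟨ht₀.1, le_rfl⟩
  have himg : volume (h '' S) ≤ ENNReal.ofReal (h t₀ - h (1/2)) := by
    have hsub2 : h '' S ⊆ Icc (h (1/2)) (h t₀) := by
      rintro _ ⟨t, ht, rfl⟩
      exact ⟨hhmono _ h12mem' t (hSsub ht) (hSsub ht).1,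
        hhmono t (hSsub ht) _ ht₀mem' (hSsub ht).2⟩
    calc volume (h '' S) ≤ volume (Icc (h (1/2)) (h t₀)) := measure_mono hsub2
      _ = ENNReal.ofReal (h t₀ - h (1/2)) := Real.volume_Icc
  have hfinal : (1/8 : ℝ) ≤ h t₀ - h (1/2) := by
    have hchain : (1/8 : ℝ≥0∞) ≤ ENNReal.ofReal (h t₀ - h (1/2)) :=
      le_trans hSvol (le_trans hlow (le_trans hjac himg))
    have hnn : 0 ≤ h t₀ - h (1/2) :=
      sub_nonneg.2 (hhmono _ h12mem' _ ht₀mem' ht₀.1)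
    rw [show (1/8 : ℝ≥0∞) = ENNReal.ofReal (1/8) by
      rw [ENNReal.ofReal_div_of_pos (by norm_num)]; norm_num] at hchain
    exact (ENNReal.ofReal_le_ofReal_iff hnn).1 hchain
  -- explicit upper bound contradiction
  have hA0 : 64*C₀^2 < y t₀ - C₀ := by
    have := hylb t₀ ht₀mem'
    linarith
  have hB0 : 64*C₀^2 < Y - C₀ := by linarith
  have hT1 : -(4*C₀^2) * (y t₀ - C₀)⁻¹ ≤ 0 := by
    have hi : 0 < (y t₀ - C₀)⁻¹ := inv_pos.2 (by linarith [sq_nonneg C₀])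
    linarith [mul_nonneg (show (0:ℝ) ≤ 4*C₀^2 by positivity) hi.le]
  have hT4 : 0 ≤ c₂ * (Y - C₀) ^ (1-β) :=
    mul_nonneg hc₂0.le (Real.rpow_nonneg (by linarith [sq_nonneg C₀]) _)
  have hT3 : 4*C₀^2 * (Y - C₀)⁻¹ < 1/16 := by
    have hlt : (Y - C₀)⁻¹ < (64*C₀^2)⁻¹ := by
      apply inv_strictAnti₀ (by positivity) hB0
    have h64 : 4*C₀^2 * (64*C₀^2)⁻¹ = 1/16 := by
      field_simp; ring
    linarith [mul_lt_mul_of_pos_left hlt (show (0:ℝ) < 4*C₀^2 by positivity), h64]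
  have hT2 : c₂ * (y t₀ - C₀) ^ (1-β) ≤ 1/16 := by
    have hb1 : y t₀ - C₀ ≤ η₁ * L := by linarith
    have hb2 : (y t₀ - C₀) ^ (1-β) ≤ (η₁ * L) ^ (1-β) :=
      Real.rpow_le_rpow (by linarith [sq_nonneg C₀]) hb1 h1β.le
    have hb3 : c₂ * (η₁ * L) ^ (1-β) = 1/16 := by
      rw [Real.mul_rpow hη₁0.le hL.le, hη₁pow]
      have hLL : L ^ (β-1) * L ^ (1-β) = 1 := by
        rw [← Real.rpow_add hL]
        norm_num
      have hne : ((2:ℝ)*C₀) ^ β ≠ 0 := ne_of_gt h2C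
      have hne2 : (1:ℝ) - β ≠ 0 := ne_of_gt h1β
      have step : c₂ * (X * L ^ (1-β)) = (L ^ (β-1) * L ^ (1-β))/16 := by
        rw [hc₂def, hc₁def, hXdef]
        field_simp
      rw [step, hLL]
    linarith [mul_le_mul_of_nonneg_left hb2 hc₂0.le]
  have hcontr : h t₀ - h (1/2) < 1/8 := by
    have hht₀ : h t₀ = -(4*C₀^2) * (y t₀ - C₀)⁻¹ + c₂ * (y t₀ - C₀) ^ (1-β) := rfl
    have hh12 : h (1/2) = -(4*C₀^2) * (Y - C₀)⁻¹ + c₂ * (Y - C₀) ^ (1-β) := rfl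
    rw [hht₀, hh12]
    have : -(-(4*C₀^2) * (Y - C₀)⁻¹) = 4*C₀^2 * (Y - C₀)⁻¹ := by ring
    linarith
  linarith
end

section
/- Let ψ ∈ C¹([0,∞), [0,∞)) satisfy ψ(s) = β s² for s ∈ [0, δ₀) and 0 < ψ(s) ≤ C for s ≥ δ₀, with β, δ₀ > 0. Define G(t) := ∫₀^t ψ(s)^{1/6} ds. Let d ∈ H¹(I) on a 1-dimensional curve I (e.g. an interval or 1-cell of length h) with ∫_I (½|d'|² + ε⁻²ψ(d)) dH¹ ≤ K. Then the Young-inequality bound holds: ∫_I |(G∘d)'|^{3/2} dH¹ ≤ C·ε^{1/2}·K, and consequently by 1-dimensional Sobolev embedding, osc_I G(d) ≤ (C·h^{1/2}·ε^{1/2}·K)^{2/3}, with C depending only on ψ. -/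
open MeasureTheory Set intervalIntegral

lemma aux_young (a b : ℝ) (ha : 0 ≤ a) (hb : 0 ≤ b) :
    a ^ ((3:ℝ)/4) * b ^ ((1:ℝ)/4) ≤ a + b := by
  have := Real.geom_mean_le_arith_mean2_weighted (by norm_num : (0:ℝ) ≤ 3/4)
    (by norm_num : (0:ℝ) ≤ 1/4) ha hb (by norm_num)
  nlinarith [this]

lemma aux_x_le (x lam : ℝ) (hx : 0 ≤ x) (hl : 0 < lam) :
    x ≤ lam ^ (-(1:ℝ)/2) * x ^ ((3:ℝ)/2) + lam := by
  rcases le_or_gt x lam with h | h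
  · have h1 : 0 ≤ lam ^ (-(1:ℝ)/2) * x ^ ((3:ℝ)/2) :=
      mul_nonneg (Real.rpow_nonneg hl.le _) (Real.rpow_nonneg hx _)
    linarith
  · have hx0 : 0 < x := hl.trans h
    have h1 : x ^ (-(1:ℝ)/2) ≤ lam ^ (-(1:ℝ)/2) :=
      Real.rpow_le_rpow_of_nonpos hl h.le (by norm_num)
    have h2 : x = x ^ ((3:ℝ)/2) * x ^ (-(1:ℝ)/2) := by
      rw [← Real.rpow_add hx0]; norm_num
    have h3 : x ^ ((3:ℝ)/2) * x ^ (-(1:ℝ)/2) ≤ x ^ ((3:ℝ)/2) * lam ^ (-(1:ℝ)/2) := by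
      exact mul_le_mul_of_nonneg_left h1 (Real.rpow_nonneg hx0.le _)
    nlinarith [Real.rpow_nonneg hx0.le ((3:ℝ)/2)]
lemma aux_chain (φ : ℝ → ℝ) (hφc : Continuous φ) (hφ0 : ∀ r, 0 ≤ φ r)
    (d dd : ℝ → ℝ) (a b : ℝ) (hab : a ≤ b)
    (hd : ∀ x ∈ Icc a b, d x = d a + ∫ r in a..x, dd r)
    (hdd : IntervalIntegrable dd volume a b) :
    |(∫ r in (0:ℝ)..(d b), φ r) - ∫ r in (0:ℝ)..(d a), φ r|
      ≤ ∫ r in a..b, φ (d r) * |dd r| := by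
  set G : ℝ → ℝ := fun x => ∫ r in (0:ℝ)..x, φ r with hGdef
  have hG : Continuous G :=
    intervalIntegral.continuous_primitive (fun u v => hφc.intervalIntegrable u v) 0
  have hGsub : ∀ y z : ℝ, G z - G y = ∫ r in y..z, φ r := fun y z =>
    integral_interval_sub_left (hφc.intervalIntegrable 0 z) (hφc.intervalIntegrable 0 y)
  have hIccEq : uIcc a b = Icc a b := uIcc_of_le hab
  have hddsub : ∀ x ∈ Icc a b, ∀ y ∈ Icc a b, IntervalIntegrable dd volume x y := by
    intro x hx y hy
    exact hdd.mono_set (by rw [hIccEq] at *; exact uIcc_subset_Icc hx hy)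
  have habssub : ∀ x ∈ Icc a b, ∀ y ∈ Icc a b,
      IntervalIntegrable (fun r => |dd r|) volume x y := fun x hx y hy => (hddsub x hx y hy).abs
  have hprim : ContinuousOn (fun x => ∫ r in a..x, dd r) (Icc a b) := by
    rw [← hIccEq]
    exact continuousOn_primitive_interval' hdd left_mem_uIcc
  have hdc : ContinuousOn d (Icc a b) :=
    (continuousOn_const.add hprim).congr (fun x hx => hd x hx)
  set g : ℝ → ℝ := fun r => φ (d r) * |dd r| with hgdef
  have hgint : ∀ x ∈ Icc a b, ∀ y ∈ Icc a b, IntervalIntegrable g volume x y := by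
    intro x hx y hy
    apply (habssub x hx y hy).continuousOn_mul
    apply (hφc.comp_continuousOn (hdc.mono ?_))
    rw [hIccEq] at *; exact uIcc_subset_Icc hx hy
  have hdist : ∀ x ∈ Icc a b, ∀ y ∈ Icc a b, x ≤ y →
      |d y - d x| ≤ ∫ r in x..y, |dd r| := by
    intro x hx y hy hxy
    have hsub : d y - d x = ∫ r in x..y, dd r := by
      rw [hd x hx, hd y hy]
      have := integral_interval_sub_left (hddsub a (left_mem_Icc.2 hab) y hy)
        (hddsub a (left_mem_Icc.2 hab) x hx)
      linarith [this]
    rw [hsub]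
    exact intervalIntegral.abs_integral_le_integral_abs hxy
  -- main claim with slack η
  have claim : ∀ η : ℝ, 0 < η → |G (d b) - G (d a)| ≤
      (∫ r in a..b, g r) + 2 * η * (∫ r in a..b, |dd r|) := by
    intro η hη
    set s : Set ℝ := {x | |G (d x) - G (d a)| ≤
      (∫ r in a..x, g r) + 2 * η * (∫ r in a..x, |dd r|)} with hsdef
    have hsub : Icc a b ⊆ s := by
      apply IsClosed.Icc_subset_of_forall_exists_gt
      · -- closedness of s ∩ Icc a b
        have hF : ContinuousOn (fun x => ((∫ r in a..x, g r)
            + 2 * η * (∫ r in a..x, |dd r|)) - |G (d x) - G (d a)|) (Icc a b) := by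
          have hprimg : ContinuousOn (fun x => ∫ r in a..x, g r) (Icc a b) := by
            rw [← hIccEq]
            exact continuousOn_primitive_interval' (hgint a (left_mem_Icc.2 hab)
              b (right_mem_Icc.2 hab)) left_mem_uIcc
          have hprima : ContinuousOn (fun x => ∫ r in a..x, |dd r|) (Icc a b) := by
            rw [← hIccEq]
            exact continuousOn_primitive_interval' (habssub a (left_mem_Icc.2 hab)
              b (right_mem_Icc.2 hab)) left_mem_uIcc
          exact (hprimg.add (continuousOn_const.mul hprima)).sub
            ((hG.comp_continuousOn hdc).sub continuousOn_const).abs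
        have heq : s ∩ Icc a b = Icc a b ∩ ((fun x => ((∫ r in a..x, g r)
            + 2 * η * (∫ r in a..x, |dd r|)) - |G (d x) - G (d a)|) ⁻¹' Ici 0) := by
          ext x
          simp only [hsdef, mem_inter_iff, mem_setOf_eq, mem_preimage, mem_Ici, sub_nonneg]
          tauto
        rw [heq]
        exact hF.preimage_isClosed_of_isClosed isClosed_Icc isClosed_Ici
      · -- a ∈ s
        simp [hsdef]
      · -- step to the right
        rintro x ⟨hxs, hxI⟩ y hy
        have hxmem : x ∈ Icc a b := ⟨hxI.1, hxI.2.le⟩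
        obtain ⟨ρ0, hρ0, hρ0'⟩ := Metric.continuousAt_iff.mp (hφc.continuousAt (x := d x)) η hη
        set ρ := ρ0 / 2 with hρdef
        have hρ : 0 < ρ := by positivity
        have hρ' : ∀ u : ℝ, |u - d x| ≤ ρ → |φ u - φ (d x)| ≤ η := by
          intro u hu
          have : dist u (d x) < ρ0 := by rw [Real.dist_eq]; linarith
          have := hρ0' this
          rw [Real.dist_eq] at this; linarith
        obtain ⟨δ, hδ, hδ'⟩ := Metric.continuousWithinAt_iff.mp (hdc x hxmem) ρ hρ
        set z := min y (min b (x + δ/2)) with hzdef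
        have hzx : x < z := lt_min hy (lt_min hxI.2 (by linarith))
        have hzb : z ≤ b := (min_le_right _ _).trans (min_le_left _ _)
        have hzmem : z ∈ Icc a b := ⟨hxI.1.trans hzx.le, hzb⟩
        have hclose : ∀ r ∈ Icc x z, |d r - d x| ≤ ρ := by
          intro r hr
          have hrmem : r ∈ Icc a b := ⟨hxI.1.trans hr.1, hr.2.trans hzb⟩
          have hrd : dist r x < δ := by
            rw [Real.dist_eq, abs_of_nonneg (by linarith [hr.1])]
            have : z ≤ x + δ/2 := (min_le_right _ _).trans (min_le_right _ _)
            linarith [hr.2]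
          have := hδ' hrmem hrd
          rw [Real.dist_eq] at this; linarith
        have hdzρ : |d z - d x| ≤ ρ := hclose z ⟨hzx.le, le_rfl⟩
        have hdz : |d z - d x| ≤ ∫ r in x..z, |dd r| := hdist x hxmem z hzmem hzx.le
        have h1 : |G (d z) - G (d x)| ≤ (φ (d x) + η) * |d z - d x| := by
          rw [hGsub (d x) (d z)]
          have hb1 := abs_le.1 hdzρ
          have hbound : ∀ u ∈ uIoc (d x) (d z), ‖φ u‖ ≤ φ (d x) + η := by
            intro u hu
            rw [Real.norm_eq_abs, abs_of_nonneg (hφ0 u)]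
            have hmin : d x - ρ ≤ min (d x) (d z) := le_min (by linarith) (by linarith)
            have hmax : max (d x) (d z) ≤ d x + ρ := max_le (by linarith) (by linarith)
            have huρ : |u - d x| ≤ ρ := abs_le.2 ⟨by linarith [hu.1.le], by linarith [hu.2]⟩
            have := abs_le.1 (hρ' u huρ)
            linarith
          have := intervalIntegral.norm_integral_le_of_norm_le_const hbound
          rw [Real.norm_eq_abs] at this
          exact this
        have h2 : (φ (d x) + η) * |d z - d x| ≤ (φ (d x) + η) * ∫ r in x..z, |dd r| :=
          mul_le_mul_of_nonneg_left hdz (by linarith [hφ0 (d x)])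
        have h3 : (φ (d x) + η) * (∫ r in x..z, |dd r|) ≤
            (∫ r in x..z, g r) + 2 * η * (∫ r in x..z, |dd r|) := by
          rw [← intervalIntegral.integral_const_mul, ← intervalIntegral.integral_const_mul,
            ← intervalIntegral.integral_add (hgint x hxmem z hzmem)
              ((habssub x hxmem z hzmem).const_mul _)]
          apply intervalIntegral.integral_mono_on hzx.le
            ((habssub x hxmem z hzmem).const_mul _)
            ((hgint x hxmem z hzmem).add ((habssub x hxmem z hzmem).const_mul _))
          intro r hr
          have hφr := abs_le.1 (hρ' (d r) (hclose r hr))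
          have : (φ (d x) + η) * |dd r| ≤ (φ (d r) + 2*η) * |dd r| :=
            mul_le_mul_of_nonneg_right (by linarith) (abs_nonneg _)
          have hg_eq : g r = φ (d r) * |dd r| := rfl
          nlinarith [this]
        have tri := abs_sub_le (G (d z)) (G (d x)) (G (d a))
        have hadd1 : (∫ r in a..x, g r) + (∫ r in x..z, g r) = ∫ r in a..z, g r :=
          integral_add_adjacent_intervals (hgint a (left_mem_Icc.2 hab) x hxmem)
            (hgint x hxmem z hzmem)
        have hadd2 : (∫ r in a..x, |dd r|) + (∫ r in x..z, |dd r|) = ∫ r in a..z, |dd r| :=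
          integral_add_adjacent_intervals (habssub a (left_mem_Icc.2 hab) x hxmem)
            (habssub x hxmem z hzmem)
        have hxs' : |G (d x) - G (d a)| ≤
            (∫ r in a..x, g r) + 2 * η * (∫ r in a..x, |dd r|) := hxs
        refine ⟨z, ?_, hzx, min_le_left _ _⟩
        simp only [hsdef, mem_setOf_eq]
        nlinarith [h1, h2, h3, tri, hadd1, hadd2, hxs']
    have hb_s := hsub (right_mem_Icc.2 hab)
    simpa [hsdef] using hb_s
  -- let η → 0
  show |G (d b) - G (d a)| ≤ ∫ r in a..b, g r
  apply le_of_forall_pos_le_add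
  intro ε hε
  set W := ∫ r in a..b, |dd r| with hWdef
  have hW : 0 ≤ W := intervalIntegral.integral_nonneg hab (fun r _ => abs_nonneg _)
  have key := claim (ε / (2 * (W + 1))) (by positivity)
  have hfin : 2 * (ε / (2 * (W + 1))) * W ≤ ε := by
    have h1 : ε / (2*(W+1)) * (2*(W+1)) = ε := div_mul_cancel₀ _ (by positivity)
    have h2 : 0 ≤ ε / (2*(W+1)) := div_nonneg hε.le (by positivity)
    nlinarith [h1, h2]
  linarith
lemma aux_endgame (A h ε K : ℝ) (hA0 : 0 ≤ A) (hh : 0 < h) (hε : 0 < ε) (hK0 : 0 ≤ K)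
    (hAB : A ≤ 2 ^ ((3:ℝ)/4) * (ε ^ ((1:ℝ)/2) * K)) :
    2 * (A ^ ((2:ℝ)/3) * h ^ ((1:ℝ)/3))
      ≤ (8 * h ^ ((1:ℝ)/2) * ε ^ ((1:ℝ)/2) * K) ^ ((2:ℝ)/3) := by
  have hX0 : 0 ≤ ε ^ ((1:ℝ)/2) * K := mul_nonneg (Real.rpow_nonneg hε.le _) hK0
  have hA23 : A ^ ((2:ℝ)/3) ≤ (2 ^ ((3:ℝ)/4) * (ε ^ ((1:ℝ)/2) * K)) ^ ((2:ℝ)/3) :=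
    Real.rpow_le_rpow hA0 hAB (by norm_num)
  have hsplit : (2 ^ ((3:ℝ)/4) * (ε ^ ((1:ℝ)/2) * K)) ^ ((2:ℝ)/3)
      = 2 ^ ((1:ℝ)/2) * (ε ^ ((1:ℝ)/2) * K) ^ ((2:ℝ)/3) := by
    rw [Real.mul_rpow (Real.rpow_nonneg (by norm_num) _) hX0,
      ← Real.rpow_mul (by norm_num : (0:ℝ) ≤ 2)]
    norm_num
  have h8eq : (8:ℝ) = (2:ℝ) ^ (3:ℝ) := by
    rw [show (3:ℝ) = ((3:ℕ):ℝ) by norm_num, Real.rpow_natCast]; norm_num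
  have h823 : (8:ℝ) ^ ((2:ℝ)/3) = 4 := by
    rw [h8eq, ← Real.rpow_mul (by norm_num : (0:ℝ) ≤ 2)]
    rw [show ((3:ℝ) * ((2:ℝ)/3)) = ((2:ℕ):ℝ) by norm_num, Real.rpow_natCast]
    norm_num
  have hRHS : (8 * h ^ ((1:ℝ)/2) * ε ^ ((1:ℝ)/2) * K) ^ ((2:ℝ)/3)
      = 4 * (h ^ ((1:ℝ)/3) * (ε ^ ((1:ℝ)/2) * K) ^ ((2:ℝ)/3)) := by
    have hre : (8:ℝ) * h ^ ((1:ℝ)/2) * ε ^ ((1:ℝ)/2) * K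
        = 8 * (h ^ ((1:ℝ)/2) * (ε ^ ((1:ℝ)/2) * K)) := by ring
    rw [hre, Real.mul_rpow (by norm_num : (0:ℝ) ≤ 8)
        (mul_nonneg (Real.rpow_nonneg hh.le _) hX0),
      Real.mul_rpow (Real.rpow_nonneg hh.le _) hX0,
      ← Real.rpow_mul hh.le, h823]
    norm_num
  have h12le2 : (2:ℝ) ^ ((1:ℝ)/2) ≤ 2 := by
    have h1 : (2:ℝ) ^ ((1:ℝ)/2) ≤ (2:ℝ) ^ (1:ℝ) :=
      Real.rpow_le_rpow_of_exponent_le one_le_two (by norm_num)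
    rw [Real.rpow_one] at h1; linarith
  have hh13 : 0 ≤ h ^ ((1:ℝ)/3) := Real.rpow_nonneg hh.le _
  have hX23 : 0 ≤ (ε ^ ((1:ℝ)/2) * K) ^ ((2:ℝ)/3) := Real.rpow_nonneg hX0 _
  rw [hRHS]
  rw [hsplit] at hA23
  nlinarith [mul_le_mul_of_nonneg_right hA23 hh13,
    mul_le_mul_of_nonneg_right (mul_le_mul_of_nonneg_right h12le2 hX23) hh13, hX23, hh13]

/-- Young-inequality estimate for `G ∘ d` and the resulting
oscillation bound.  Here `ψ(s) = β s²` near `0`, `0 < ψ ≤ Cψ` away from `0`,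
`G(t) = ∫₀^t ψ^{1/6}`, and `d` is an `H¹` (absolutely continuous) function on
an interval `[0,h]` with derivative `dd` and energy
`∫₀^h (½|d'|² + ε⁻²ψ(d)) ≤ K`.  Then
`∫₀^h ψ(d)^{1/4} |d'|^{3/2} ≤ C ε^{1/2} K` and
`osc G(d) ≤ (C h^{1/2} ε^{1/2} K)^{2/3}`, with `C` depending only on `ψ`. -/
theorem stmt15 (ψ : ℝ → ℝ) (β δ₀ Cψ : ℝ) (hβ : 0 < β) (hδ₀ : 0 < δ₀) (hCψ : 0 < Cψ)
    (hψC1 : ContDiffOn ℝ 1 ψ (Ici 0))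
    (hψ1 : ∀ s ∈ Ico (0 : ℝ) δ₀, ψ s = β * s ^ 2)
    (hψ2 : ∀ s : ℝ, δ₀ ≤ s → 0 < ψ s ∧ ψ s ≤ Cψ)
    (hψ0 : ∀ s : ℝ, 0 ≤ s → 0 ≤ ψ s) :
    ∃ C : ℝ, 0 < C ∧
      ∀ (ε h K : ℝ) (d dd : ℝ → ℝ), 0 < ε → 0 < h →
        (∀ t ∈ Icc (0 : ℝ) h, 0 ≤ d t) →
        (∀ s ∈ Icc (0 : ℝ) h, ∀ t ∈ Icc (0 : ℝ) h, d t = d s + ∫ r in s..t, dd r) →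
        Measurable dd →
        IntervalIntegrable dd volume 0 h →
        IntervalIntegrable (fun t => (dd t) ^ 2) volume 0 h →
        IntervalIntegrable (fun t => ψ (d t)) volume 0 h →
        (∫ t in (0 : ℝ)..h, ((1/2 : ℝ) * (dd t) ^ 2 + (ε ^ 2)⁻¹ * ψ (d t))) ≤ K →
        ((∫ t in (0 : ℝ)..h, (ψ (d t)) ^ ((1 : ℝ)/4) * |dd t| ^ ((3 : ℝ)/2))
            ≤ C * ε ^ ((1 : ℝ)/2) * K) ∧
        (∀ s ∈ Icc (0 : ℝ) h, ∀ t ∈ Icc (0 : ℝ) h,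
          |(∫ r in (0 : ℝ)..(d t), (ψ r) ^ ((1 : ℝ)/6)) -
              (∫ r in (0 : ℝ)..(d s), (ψ r) ^ ((1 : ℝ)/6))|
            ≤ (C * h ^ ((1 : ℝ)/2) * ε ^ ((1 : ℝ)/2) * K) ^ ((2 : ℝ)/3)) := by
  refine ⟨8, by norm_num, ?_⟩
  intro ε h K d dd hε hh hd0 hAC hmeas hddint hdd2int hψdint hK
  have hh0 : (0:ℝ) ≤ h := hh.le
  have h0mem : (0:ℝ) ∈ Icc (0:ℝ) h := left_mem_Icc.2 hh0
  have hhmem : h ∈ Icc (0:ℝ) h := right_mem_Icc.2 hh0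
  have hψcont : ContinuousOn ψ (Ici 0) := hψC1.continuousOn
  set Ψ : ℝ → ℝ := fun r => ψ (max r 0) with hΨdef
  have hΨc : Continuous Ψ :=
    hψcont.comp_continuous (continuous_id.max continuous_const) (fun r => le_max_right r 0)
  have hΨ0 : ∀ r, 0 ≤ Ψ r := fun r => hψ0 _ (le_max_right r 0)
  have hΨeq : ∀ r : ℝ, 0 ≤ r → Ψ r = ψ r := by
    intro r hr; simp only [hΨdef]; rw [max_eq_left hr]
  set φ : ℝ → ℝ := fun r => Ψ r ^ ((1:ℝ)/6) with hφdef
  have hφc : Continuous φ := hΨc.rpow_const (fun x => Or.inr (by norm_num))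
  have hφ0 : ∀ r, 0 ≤ φ r := fun r => Real.rpow_nonneg (hΨ0 r) _
  set q : ℝ → ℝ := fun t => ψ (d t) ^ ((1:ℝ)/4) * |dd t| ^ ((3:ℝ)/2) with hqdef
  -- pointwise Young bound
  have hkey : ∀ t ∈ Icc (0:ℝ) h, q t ≤
      2 ^ ((3:ℝ)/4) * ε ^ ((1:ℝ)/2) * ((1/2 : ℝ) * dd t ^ 2 + (ε^2)⁻¹ * ψ (d t)) := by
    intro t ht
    have hy : 0 ≤ ψ (d t) := hψ0 _ (hd0 t ht)
    have ha : (0:ℝ) ≤ (1/2 : ℝ) * dd t ^ 2 := by positivity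
    have hb : (0:ℝ) ≤ (ε^2)⁻¹ * ψ (d t) := by positivity
    have e1 : ((1/2 : ℝ) * dd t ^ 2) ^ ((3:ℝ)/4)
        = (2:ℝ) ^ (-((3:ℝ)/4)) * |dd t| ^ ((3:ℝ)/2) := by
      rw [Real.mul_rpow (by norm_num) (sq_nonneg _)]
      congr 1
      · have h12 : ((1:ℝ)/2) = (2:ℝ) ^ (-(1:ℝ)) := by
          rw [Real.rpow_neg_one]; norm_num
        rw [h12, ← Real.rpow_mul (by norm_num : (0:ℝ) ≤ 2)]
        norm_num
      · rw [← sq_abs, ← Real.rpow_natCast |dd t| 2, ← Real.rpow_mul (abs_nonneg _)]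
        norm_num
    have e2 : ((ε^2)⁻¹ * ψ (d t)) ^ ((1:ℝ)/4)
        = (ε ^ ((1:ℝ)/2))⁻¹ * ψ (d t) ^ ((1:ℝ)/4) := by
      rw [Real.mul_rpow (by positivity) hy]
      congr 1
      have hε2 : ((ε^2)⁻¹ : ℝ) = ε ^ ((-2):ℝ) := by
        rw [Real.rpow_neg hε.le, ← Real.rpow_natCast ε 2]; norm_num
      rw [hε2, ← Real.rpow_mul hε.le]
      rw [show ((-2:ℝ) * ((1:ℝ)/4)) = -((1:ℝ)/2) by norm_num, Real.rpow_neg hε.le]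
    have hyoung := aux_young _ _ ha hb
    have hq_eq : q t = 2 ^ ((3:ℝ)/4) * ε ^ ((1:ℝ)/2) *
        (((1/2 : ℝ) * dd t ^ 2) ^ ((3:ℝ)/4) * ((ε^2)⁻¹ * ψ (d t)) ^ ((1:ℝ)/4)) := by
      rw [e1, e2]
      have h24 : (2:ℝ) ^ ((3:ℝ)/4) * (2:ℝ) ^ (-((3:ℝ)/4)) = 1 := by
        rw [← Real.rpow_add (by norm_num : (0:ℝ) < 2)]; norm_num
      have hεc : ε ^ ((1:ℝ)/2) * (ε ^ ((1:ℝ)/2))⁻¹ = 1 :=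
        mul_inv_cancel₀ (ne_of_gt (Real.rpow_pos_of_pos hε _))
      have expand : 2 ^ ((3:ℝ)/4) * ε ^ ((1:ℝ)/2) *
          ((2:ℝ) ^ (-((3:ℝ)/4)) * |dd t| ^ ((3:ℝ)/2) *
            ((ε ^ ((1:ℝ)/2))⁻¹ * ψ (d t) ^ ((1:ℝ)/4)))
          = ((2:ℝ) ^ ((3:ℝ)/4) * (2:ℝ) ^ (-((3:ℝ)/4))) *
            ((ε ^ ((1:ℝ)/2)) * (ε ^ ((1:ℝ)/2))⁻¹) *
            (ψ (d t) ^ ((1:ℝ)/4) * |dd t| ^ ((3:ℝ)/2)) := by ring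
      rw [expand, h24, hεc, one_mul, one_mul]
    rw [hq_eq]
    exact mul_le_mul_of_nonneg_left hyoung (by positivity)
  -- integrability of q
  have hbig : IntervalIntegrable
      (fun t => 2 ^ ((3:ℝ)/4) * ε ^ ((1:ℝ)/2) * ((1/2 : ℝ) * dd t ^ 2 + (ε^2)⁻¹ * ψ (d t)))
      volume 0 h :=
    (((hdd2int.const_mul ((1:ℝ)/2)).add (hψdint.const_mul ((ε^2)⁻¹))).const_mul _)
  have hq_aesm : AEStronglyMeasurable q (volume.restrict (uIoc (0:ℝ) h)) := by
    have h1 : AEStronglyMeasurable (fun t => ψ (d t)) (volume.restrict (uIoc (0:ℝ) h)) := by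
      rw [uIoc_of_le hh0]
      exact hψdint.1.aestronglyMeasurable
    have hc14 : Continuous (fun y : ℝ => y ^ ((1:ℝ)/4)) :=
      continuous_id.rpow_const (fun x => Or.inr (by norm_num))
    have hc32 : Continuous (fun y : ℝ => y ^ ((3:ℝ)/2)) :=
      continuous_id.rpow_const (fun x => Or.inr (by norm_num))
    exact (hc14.comp_aestronglyMeasurable h1).mul
      ((hc32.comp (continuous_abs)).comp_aestronglyMeasurable hmeas.aestronglyMeasurable.restrict)
  have hq_int : IntervalIntegrable q volume 0 h := by
    apply hbig.mono_fun hq_aesm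
    rw [uIoc_of_le hh0]
    filter_upwards [ae_restrict_mem measurableSet_Ioc] with t ht
    have htI : t ∈ Icc (0:ℝ) h := Ioc_subset_Icc_self ht
    have hy : 0 ≤ ψ (d t) := hψ0 _ (hd0 t htI)
    have hq0 : 0 ≤ q t := mul_nonneg (Real.rpow_nonneg hy _) (Real.rpow_nonneg (abs_nonneg _) _)
    have hbig0 : 0 ≤ 2 ^ ((3:ℝ)/4) * ε ^ ((1:ℝ)/2) *
        ((1/2 : ℝ) * dd t ^ 2 + (ε^2)⁻¹ * ψ (d t)) := by positivity
    rw [Real.norm_eq_abs, Real.norm_eq_abs, abs_of_nonneg hq0, abs_of_nonneg hbig0]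
    exact hkey t htI
  -- K is nonnegative
  have hK0 : 0 ≤ K := by
    refine le_trans (intervalIntegral.integral_nonneg hh0 ?_) hK
    intro u hu
    have := hψ0 _ (hd0 u hu)
    positivity
  -- Part 1 with sharp constant
  have hA_le : (∫ t in (0:ℝ)..h, q t) ≤ 2 ^ ((3:ℝ)/4) * ε ^ ((1:ℝ)/2) * K := by
    have h1 : (∫ t in (0:ℝ)..h, q t) ≤ ∫ t in (0:ℝ)..h,
        2 ^ ((3:ℝ)/4) * ε ^ ((1:ℝ)/2) * ((1/2 : ℝ) * dd t ^ 2 + (ε^2)⁻¹ * ψ (d t)) :=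
      intervalIntegral.integral_mono_on hh0 hq_int hbig hkey
    have h2 : (∫ t in (0:ℝ)..h,
        2 ^ ((3:ℝ)/4) * ε ^ ((1:ℝ)/2) * ((1/2 : ℝ) * dd t ^ 2 + (ε^2)⁻¹ * ψ (d t)))
        = 2 ^ ((3:ℝ)/4) * ε ^ ((1:ℝ)/2) *
          ∫ t in (0:ℝ)..h, ((1/2 : ℝ) * dd t ^ 2 + (ε^2)⁻¹ * ψ (d t)) :=
      intervalIntegral.integral_const_mul _ _
    have h3 : 2 ^ ((3:ℝ)/4) * ε ^ ((1:ℝ)/2) *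
          (∫ t in (0:ℝ)..h, ((1/2 : ℝ) * dd t ^ 2 + (ε^2)⁻¹ * ψ (d t)))
        ≤ 2 ^ ((3:ℝ)/4) * ε ^ ((1:ℝ)/2) * K :=
      mul_le_mul_of_nonneg_left hK (by positivity)
    linarith
  have h234 : (2:ℝ) ^ ((3:ℝ)/4) ≤ 8 := by
    have : (2:ℝ) ^ ((3:ℝ)/4) ≤ (2:ℝ) ^ (1:ℝ) :=
      Real.rpow_le_rpow_of_exponent_le one_le_two (by norm_num)
    rw [Real.rpow_one] at this; linarith
  constructor
  · refine le_trans hA_le ?_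
    have hs1 : (2:ℝ) ^ ((3:ℝ)/4) * ε ^ ((1:ℝ)/2) ≤ 8 * ε ^ ((1:ℝ)/2) :=
      mul_le_mul_of_nonneg_right h234 (Real.rpow_nonneg hε.le ((1:ℝ)/2))
    have hs2 := mul_le_mul_of_nonneg_right hs1 hK0
    linarith
  · -- Part 2: oscillation bound
    have hGcongr : ∀ x : ℝ, 0 ≤ x →
        (∫ r in (0:ℝ)..x, ψ r ^ ((1:ℝ)/6)) = ∫ r in (0:ℝ)..x, φ r := by
      intro x hx
      apply intervalIntegral.integral_congr
      intro r hr
      rw [uIcc_of_le hx] at hr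
      simp only [hφdef]
      rw [hΨeq r hr.1]
    have hprim : ContinuousOn (fun x => ∫ r in (0:ℝ)..x, dd r) (Icc 0 h) := by
      rw [← uIcc_of_le hh0]
      exact continuousOn_primitive_interval' hddint left_mem_uIcc
    have hdc : ContinuousOn d (Icc 0 h) :=
      (continuousOn_const.add hprim).congr (fun x hx => hAC 0 h0mem x hx)
    obtain ⟨A, hAdef⟩ : ∃ A : ℝ, A = ∫ t in (0:ℝ)..h, q t := ⟨_, rfl⟩
    have hA0 : 0 ≤ A := by
      rw [hAdef]
      exact intervalIntegral.integral_nonneg hh0 (fun r hr =>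
        mul_nonneg (Real.rpow_nonneg (hψ0 _ (hd0 r hr)) _) (Real.rpow_nonneg (abs_nonneg _) _))
    have hX0 : 0 ≤ ε ^ ((1:ℝ)/2) * K := mul_nonneg (Real.rpow_nonneg hε.le _) hK0
    have main : ∀ u ∈ Icc (0:ℝ) h, ∀ v ∈ Icc (0:ℝ) h, u ≤ v →
        |(∫ r in (0:ℝ)..(d v), ψ r ^ ((1:ℝ)/6)) - (∫ r in (0:ℝ)..(d u), ψ r ^ ((1:ℝ)/6))|
          ≤ (8 * h ^ ((1:ℝ)/2) * ε ^ ((1:ℝ)/2) * K) ^ ((2:ℝ)/3) := by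
      intro u hu v hv huv
      rw [hGcongr _ (hd0 v hv), hGcongr _ (hd0 u hu)]
      have hchain := aux_chain φ hφc hφ0 d dd u v huv
        (fun x hx => hAC u hu x ⟨le_trans hu.1 hx.1, le_trans hx.2 hv.2⟩)
        (hddint.mono_set (by rw [uIcc_of_le hh0]; exact uIcc_subset_Icc hu hv))
      have hsubIcc : ∀ x ∈ Icc (0:ℝ) h, ∀ y ∈ Icc (0:ℝ) h,
          uIcc x y ⊆ uIcc (0:ℝ) h := by
        intro x hx y hy; rw [uIcc_of_le hh0]; exact uIcc_subset_Icc hx hy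
      have hqsub : ∀ x ∈ Icc (0:ℝ) h, ∀ y ∈ Icc (0:ℝ) h, IntervalIntegrable q volume x y :=
        fun x hx y hy => hq_int.mono_set (hsubIcc x hx y hy)
      have hgsub : IntervalIntegrable (fun r => φ (d r) * |dd r|) volume u v := by
        apply ((hddint.mono_set (hsubIcc u hu v hv)).abs).continuousOn_mul
        apply hφc.comp_continuousOn (hdc.mono ?_)
        rw [uIcc_of_le huv]
        intro x hx; exact ⟨le_trans hu.1 hx.1, le_trans hx.2 hv.2⟩
      have hqv : (∫ r in u..v, q r) ≤ A := by
        have e1 : (∫ r in (0:ℝ)..u, q r) + (∫ r in u..v, q r) = ∫ r in (0:ℝ)..v, q r :=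
          integral_add_adjacent_intervals (hqsub 0 h0mem u hu) (hqsub u hu v hv)
        have e2 : (∫ r in (0:ℝ)..v, q r) + (∫ r in v..h, q r) = ∫ r in (0:ℝ)..h, q r :=
          integral_add_adjacent_intervals (hqsub 0 h0mem v hv) (hqsub v hv h hhmem)
        have n1 : 0 ≤ ∫ r in (0:ℝ)..u, q r := intervalIntegral.integral_nonneg hu.1
          (fun r hr => mul_nonneg
            (Real.rpow_nonneg (hψ0 _ (hd0 r ⟨hr.1, le_trans hr.2 hu.2⟩)) _)
            (Real.rpow_nonneg (abs_nonneg _) _))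
        have n2 : 0 ≤ ∫ r in v..h, q r := intervalIntegral.integral_nonneg hv.2
          (fun r hr => mul_nonneg
            (Real.rpow_nonneg (hψ0 _ (hd0 r ⟨le_trans hv.1 hr.1, hr.2⟩)) _)
            (Real.rpow_nonneg (abs_nonneg _) _))
        rw [hAdef]; linarith
      have hlam : ∀ lam : ℝ, 0 < lam →
          (∫ r in u..v, φ (d r) * |dd r|) ≤ lam ^ (-(1:ℝ)/2) * A + lam * h := by
        intro lam hlamp
        have hpt : ∀ r ∈ Icc u v, φ (d r) * |dd r| ≤ lam ^ (-(1:ℝ)/2) * q r + lam := by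
          intro r hr
          have hrIcc : r ∈ Icc (0:ℝ) h := ⟨le_trans hu.1 hr.1, le_trans hr.2 hv.2⟩
          have hdr : 0 ≤ d r := hd0 r hrIcc
          have hx0 : 0 ≤ φ (d r) * |dd r| := mul_nonneg (hφ0 _) (abs_nonneg _)
          have hpow : (φ (d r) * |dd r|) ^ ((3:ℝ)/2) = q r := by
            rw [Real.mul_rpow (hφ0 _) (abs_nonneg _)]
            simp only [hφdef, hqdef]
            rw [← Real.rpow_mul (hΨ0 (d r)),
              show ((1:ℝ)/6 * ((3:ℝ)/2)) = (1:ℝ)/4 by norm_num, hΨeq _ hdr]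
          have hax := aux_x_le _ lam hx0 hlamp
          rw [hpow] at hax
          exact hax
        have hvu : v - u ≤ h := by
          have := hu.1; have := hv.2; linarith
        calc (∫ r in u..v, φ (d r) * |dd r|)
            ≤ ∫ r in u..v, (lam ^ (-(1:ℝ)/2) * q r + lam) :=
              intervalIntegral.integral_mono_on huv hgsub
                (((hqsub u hu v hv).const_mul _).add intervalIntegrable_const) hpt
          _ = lam ^ (-(1:ℝ)/2) * (∫ r in u..v, q r) + (v - u) * lam := by
              rw [intervalIntegral.integral_add ((hqsub u hu v hv).const_mul _)
                intervalIntegrable_const, intervalIntegral.integral_const_mul,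
                intervalIntegral.integral_const, smul_eq_mul]
          _ ≤ lam ^ (-(1:ℝ)/2) * A + lam * h := by
              have hm := mul_le_mul_of_nonneg_left hqv (Real.rpow_nonneg hlamp.le (-(1:ℝ)/2))
              nlinarith [hlamp.le]
      have hT0 : 0 ≤ (8 * h ^ ((1:ℝ)/2) * ε ^ ((1:ℝ)/2) * K) ^ ((2:ℝ)/3) := by
        apply Real.rpow_nonneg
        have := Real.rpow_nonneg hh.le ((1:ℝ)/2)
        nlinarith [hX0, Real.rpow_nonneg hh.le ((1:ℝ)/2), Real.rpow_nonneg hε.le ((1:ℝ)/2), hK0]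
      rcases eq_or_lt_of_le hA0 with hA | hA
      · -- A = 0
        have hle0 : (∫ r in u..v, φ (d r) * |dd r|) ≤ 0 := by
          apply le_of_forall_pos_le_add
          intro ε' hε'
          have hl := hlam (ε'/h) (by positivity)
          rw [← hA] at hl
          rw [div_mul_cancel₀ _ (ne_of_gt hh)] at hl
          simpa using hl
        calc |(∫ r in (0:ℝ)..(d v), φ r) - ∫ r in (0:ℝ)..(d u), φ r|
            ≤ ∫ r in u..v, φ (d r) * |dd r| := hchain
          _ ≤ 0 := hle0
          _ ≤ _ := hT0
      · -- A > 0
        obtain ⟨lam, hlamdef⟩ : ∃ lam : ℝ, lam = A ^ ((2:ℝ)/3) * h ^ (-((2:ℝ)/3)) := ⟨_, rfl⟩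
        have hlamp : 0 < lam := by
          rw [hlamdef]
          exact mul_pos (Real.rpow_pos_of_pos hA _) (Real.rpow_pos_of_pos hh _)
        have hbound := hlam lam hlamp
        have hlaminv : lam ^ (-(1:ℝ)/2) = A ^ (-((1:ℝ)/3)) * h ^ ((1:ℝ)/3) := by
          rw [hlamdef, Real.mul_rpow (Real.rpow_nonneg hA0 _) (Real.rpow_nonneg hh.le _),
            ← Real.rpow_mul hA0, ← Real.rpow_mul hh.le]
          norm_num
        have eA : A ^ (-((1:ℝ)/3)) * A = A ^ ((2:ℝ)/3) := by
          nth_rewrite 2 [← Real.rpow_one A]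
          rw [← Real.rpow_add hA]; norm_num
        have eh : h ^ (-((2:ℝ)/3)) * h = h ^ ((1:ℝ)/3) := by
          nth_rewrite 2 [← Real.rpow_one h]
          rw [← Real.rpow_add hh]; norm_num
        have hcomp : lam ^ (-(1:ℝ)/2) * A + lam * h = 2 * (A ^ ((2:ℝ)/3) * h ^ ((1:ℝ)/3)) := by
          rw [hlaminv, hlamdef]
          calc A ^ (-((1:ℝ)/3)) * h ^ ((1:ℝ)/3) * A + A ^ ((2:ℝ)/3) * h ^ (-((2:ℝ)/3)) * h
              = (A ^ (-((1:ℝ)/3)) * A) * h ^ ((1:ℝ)/3)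
                + A ^ ((2:ℝ)/3) * (h ^ (-((2:ℝ)/3)) * h) := by ring
            _ = 2 * (A ^ ((2:ℝ)/3) * h ^ ((1:ℝ)/3)) := by rw [eA, eh]; ring
        -- compare with target
        have hAB : A ≤ 2 ^ ((3:ℝ)/4) * (ε ^ ((1:ℝ)/2) * K) := by
          rw [hAdef, ← mul_assoc]; exact hA_le
        have hfinal := aux_endgame A h ε K hA0 hh hε hK0 hAB
        calc |(∫ r in (0:ℝ)..(d v), φ r) - ∫ r in (0:ℝ)..(d u), φ r|
            ≤ ∫ r in u..v, φ (d r) * |dd r| := hchain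
          _ ≤ lam ^ (-(1:ℝ)/2) * A + lam * h := hbound
          _ = 2 * (A ^ ((2:ℝ)/3) * h ^ ((1:ℝ)/3)) := hcomp
          _ ≤ _ := hfinal
    intro s hs t ht
    rcases le_total s t with hst | hst
    · exact main s hs t ht hst
    · rw [abs_sub_comm]; exact main t ht s hs hst
end
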